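/- Let G, H be lists with G a prefix of H, and let f be a prefix-preserving map into lists such that for each input, removing trailing 'incomplete' operations from f(H) never removes an operation that is complete in H. If an operation op is removed from the end of f(H) (because op is not complete in H) and op also occurs in f(G), then op is the last element of f(G) and is not complete in G, hence is also removed from f(G); therefore the truncation operation preserves the prefix-preserving property of f. -/
import Mathlib

/-- If `q` implies `p`, then `dropWhile p l` is a suffix of `dropWhile q l`. -/
private lemma dropWhile_suffix_of_imp {α : Type*} (p q : α → Bool)
    (h : ∀ x, q x = true → p x = true) (l : List α) :
    l.dropWhile p <:+ l.dropWhile q := by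
  induction l with
  | nil => simp
  | cons a l ih =>
    by_cases hq : q a = true
    · simpa [List.dropWhile, hq, h a hq] using ih
    · cases hp : p a with
      | true =>
        simpa [List.dropWhile, hq, hp] using (List.dropWhile_suffix p (l := l)).trans
          (List.suffix_cons a l)
      | false => simp [List.dropWhile, hq, hp]

private lemma dropWhile_suffix_append {α : Type*} (p q : α → Bool)
    (h : ∀ x, q x = true → p x = true) (C A : List α) :
    A.dropWhile p <:+ (C ++ A).dropWhile q := by
  induction C with
  | nil => simpa using dropWhile_suffix_of_imp p q h A
  | cons c C ih =>
    by_cases hq : q c = true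
    · simpa [List.dropWhile, hq] using ih
    · simp only [List.cons_append, List.dropWhile, hq, Bool.false_eq_true, if_false]
      exact ((List.dropWhile_suffix p).trans (List.suffix_append C A)).trans
        (List.suffix_cons c (C ++ A))

/-- Truncating trailing incomplete operations (completeness being monotone
under prefixes) preserves the prefix-preserving property of `f`. -/
theorem truncation_preserves_prefix_preserving {α : Type*}
    (complete : List α → α → Bool)
    (hmono : ∀ (G H : List α) (x : α), G <+: H →
      complete G x = true → complete H x = true)
    (f : List α → List α)
    (hf : ∀ G H : List α, G <+: H → f G <+: f H) :
    ∀ G H : List α, G <+: H →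
      ((f G).reverse.dropWhile (fun op => !(complete G op))).reverse <+:
      ((f H).reverse.dropWhile (fun op => !(complete H op))).reverse := by
  intro G H hGH
  rw [List.reverse_prefix]
  have hsuf : (f G).reverse <:+ (f H).reverse := by
    rw [List.reverse_suffix]; exact hf G H hGH
  obtain ⟨C, hC⟩ := hsuf
  rw [← hC]
  refine dropWhile_suffix_append _ _ (fun x hx => ?_) C (f G).reverse
  simp only [Bool.not_eq_true'] at hx ⊢
  by_contra hc
  exact absurd (hmono G H x hGH (by simpa using hc)) (by simp [hx])
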